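/- With G = S6 ⋉ Z^5 as above and N the normal closure of P = u_{1,2}u_{2,3}^2u_{3,4}u_{5,6}^{-1}, for every k with 0 ≤ k ≤ 4 the element u_{5-k,6-k}^2 lies in N; consequently u_{i,i+1}^2 ∈ N for all 1 ≤ i ≤ 5. -/

import Mathlib

open Equiv SemidirectProduct

/-- The sum-of-coordinates homomorphism on `ℤ^6`. -/
def sumHom : (Fin 6 → ℤ) →+ ℤ :=
  ∑ i : Fin 6, Pi.evalAddMonoidHom (fun _ : Fin 6 => ℤ) i

/-- The rank-5 lattice `A` of integer vectors with coordinate sum zero, realizing the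
abelian group generated by the `u_{i,j}` with `u_{i,i} = e`, `u_{i,j}u_{j,i} = e`,
`u_{i,k}u_{k,j} = u_{i,j}` (i.e. `A_{1,6} ≅ ℤ^5`), via `u_{i,j} = e_i - e_j`. -/
def A : AddSubgroup (Fin 6 → ℤ) := sumHom.ker

lemma mem_A {v : Fin 6 → ℤ} : v ∈ A ↔ ∑ i, v i = 0 := by
  simp [A, sumHom, AddMonoidHom.mem_ker]

/-- Permutation of coordinates, as an additive automorphism of `ℤ^6`. -/
def pact (σ : Perm (Fin 6)) : (Fin 6 → ℤ) ≃+ (Fin 6 → ℤ) where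
  toFun v := v ∘ σ.symm
  invFun v := v ∘ σ
  left_inv v := by ext i; simp
  right_inv v := by ext i; simp
  map_add' v w := rfl

lemma pact_mem (σ : Perm (Fin 6)) {v : Fin 6 → ℤ} (hv : v ∈ A) :
    pact σ v ∈ A := by
  rw [mem_A] at hv ⊢
  simpa [pact] using (Equiv.sum_comp σ.symm v).trans hv

/-- The restriction of `pact σ` to `A`. -/
def pactA (σ : Perm (Fin 6)) : A ≃+ A where
  toFun w := ⟨pact σ w, pact_mem σ w.2⟩
  invFun w := ⟨pact σ⁻¹ w, pact_mem σ⁻¹ w.2⟩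
  left_inv w := by ext i; simp [pact, Equiv.Perm.inv_def]
  right_inv w := by ext i; simp [pact, Equiv.Perm.inv_def]
  map_add' v w := by ext i; simp [pact]

/-- The action of `S6` on `A` by permuting coordinates: `σ · u_{i,j} = u_{σ(i),σ(j)}`. -/
def φA : Perm (Fin 6) →* MulAut (Multiplicative A) where
  toFun σ := AddEquiv.toMultiplicative (pactA σ)
  map_one' := by ext w; rfl
  map_mul' σ τ := by ext w; rfl

/-- The semidirect product `G = S6 ⋉ ℤ^5`. -/
abbrev G := Multiplicative A ⋊[φA] Perm (Fin 6)

/-- `u_{i,j} := e_i - e_j` in `ℤ^6`, an element of `A`. -/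
def uA (i j : Fin 6) : A :=
  ⟨Pi.single i 1 - Pi.single j 1, by
    rw [mem_A]; simp [Finset.sum_sub_distrib, Pi.single_apply]⟩

/-- The projective relation `P = u_{1,2} u_{2,3}^2 u_{3,4} u_{5,6}⁻¹`
(0-based indices), as an element of `G`. -/
def P : G := inl (Multiplicative.ofAdd (uA 0 1 + 2 • uA 1 2 + uA 2 3 - uA 4 5))

/-- The normal closure `N` of `P` in `G`. -/
def N : Subgroup G := Subgroup.normalClosure {P}

lemma P_mem : P ∈ N := Subgroup.subset_normalClosure (Set.mem_singleton P)

lemma conjA {a : A} (h : (inl (Multiplicative.ofAdd a) : G) ∈ N) (σ : Perm (Fin 6)) :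
    (inl (Multiplicative.ofAdd (pactA σ a)) : G) ∈ N := by
  have h2 := (Subgroup.normalClosure_normal (s := {P})).conj_mem _ h (inr σ)
  have e : (inl (Multiplicative.ofAdd (pactA σ a)) : G)
      = inr σ * inl (Multiplicative.ofAdd a) * (inr σ : G)⁻¹ := by
    rw [← map_inv, ← SemidirectProduct.inl_aut]
    rfl
  rw [e]; exact h2

lemma pactA_uA (σ : Perm (Fin 6)) (i j : Fin 6) : pactA σ (uA i j) = uA (σ i) (σ j) := by
  apply Subtype.ext
  funext x
  simp [pactA, pact, uA, Pi.single_apply, Equiv.symm_apply_eq]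

def σ1 : Perm (Fin 6) := Equiv.swap 1 2 * Equiv.swap 4 5
def σ2 : Perm (Fin 6) := Equiv.swap 0 1 * Equiv.swap 1 3 * Equiv.swap 3 2 * Equiv.swap 4 5

lemma base45 : (inl (Multiplicative.ofAdd (2 • uA 4 5)) : G) ∈ N := by
  have h1 := conjA P_mem σ1
  have h2 := conjA P_mem σ2
  have e : (2 • uA 4 5 : A)
      = pactA σ1 (uA 0 1 + 2 • uA 1 2 + uA 2 3 - uA 4 5)
        + pactA σ2 (uA 0 1 + 2 • uA 1 2 + uA 2 3 - uA 4 5) := by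
    apply Subtype.ext; decide
  have e2 : (inl (Multiplicative.ofAdd (2 • uA 4 5)) : G)
      = inl (Multiplicative.ofAdd (pactA σ1 (uA 0 1 + 2 • uA 1 2 + uA 2 3 - uA 4 5)))
        * inl (Multiplicative.ofAdd (pactA σ2 (uA 0 1 + 2 • uA 1 2 + uA 2 3 - uA 4 5))) := by
    rw [e, ofAdd_add, map_mul]
  rw [e2]; exact mul_mem h1 h2

lemma base2 (a b : Fin 6) (σ : Perm (Fin 6)) (ha : σ 4 = a) (hb : σ 5 = b) :
    (inl (Multiplicative.ofAdd (2 • uA a b)) : G) ∈ N := by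
  subst ha hb
  have h := conjA base45 σ
  rwa [map_nsmul, pactA_uA] at h

/-- For every `0 ≤ k ≤ 4`, the element `u_{5-k,6-k}^2` lies in the normal closure `N`
of `P`; consequently `u_{i,i+1}^2 ∈ N` for all `1 ≤ i ≤ 5` (0-based indices below). -/
theorem stmt_8 :
    (∀ k : ℕ, k ≤ 4 →
      (inl (Multiplicative.ofAdd (2 • uA ⟨4 - k, by omega⟩ ⟨5 - k, by omega⟩)) : G) ∈ N) ∧
    (∀ i : Fin 5,
      (inl (Multiplicative.ofAdd (2 • uA i.castSucc i.succ)) : G) ∈ N) := by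
  constructor
  · intro k hk
    interval_cases k
    · exact base2 _ _ ((finRotate 6).symm ^ 0) (by decide) (by decide)
    · exact base2 _ _ ((finRotate 6).symm ^ 1) (by decide) (by decide)
    · exact base2 _ _ ((finRotate 6).symm ^ 2) (by decide) (by decide)
    · exact base2 _ _ ((finRotate 6).symm ^ 3) (by decide) (by decide)
    · exact base2 _ _ ((finRotate 6).symm ^ 4) (by decide) (by decide)
  · intro i
    fin_cases i
    · exact base2 _ _ ((finRotate 6).symm ^ 4) (by decide) (by decide)
    · exact base2 _ _ ((finRotate 6).symm ^ 3) (by decide) (by decide)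
    · exact base2 _ _ ((finRotate 6).symm ^ 2) (by decide) (by decide)
    · exact base2 _ _ ((finRotate 6).symm ^ 1) (by decide) (by decide)
    · exact base2 _ _ ((finRotate 6).symm ^ 0) (by decide) (by decide)
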